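/- Let S be a d-symbol with core C = C(S), and let δ = (c_0,…,c_{d−1}; k) be any d-hook data tuple. Then the multiset 𝓗^δ(C) of δ-lengths of the hooks of C is a sub-multiset of the multiset 𝓗^δ(S) of δ-lengths of the hooks of S. -/
import Mathlib


/-- `X^{+s} = (X + s) ∪ {0,…,s−1}` for a β-set `X`. -/
def shiftUp (X : Finset ℕ) (s : ℕ) : Finset ℕ :=
  X.image (· + s) ∪ Finset.range s

/-- The `d`-symbol `s_d(X)` associated to a β-set `X`:
`X_i^{(d)} = {k ∈ ℕ : i + k*d ∈ X}`. -/
def sd (d : ℕ) (X : Finset ℕ) : Fin d → Finset ℕ :=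
  fun i => (X.filter fun a => a % d = (i : ℕ)).image fun a => a / d

/-- The inverse of `s_d`, recovering the β-set of a `d`-symbol. -/
def sdInv (d : ℕ) (S : Fin d → Finset ℕ) : Finset ℕ :=
  Finset.univ.biUnion fun i => (S i).image fun k => (i : ℕ) + k * d

/-- Hooks of a β-set `X`: pairs `(a,b)` with `a > b`, `a ∈ X`, `b ∉ X`. -/
def betaHooks (X : Finset ℕ) : Finset (ℕ × ℕ) :=
  (X ×ˢ Finset.range (X.sup id + 1)).filter fun p => p.2 < p.1 ∧ p.2 ∉ X

/-- Hooks of a `d`-symbol `S`: quadruples `(a,b,i,j)` with `a ∈ S i`, `b ∉ S j`,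
and either `a > b`, or `a = b` and `i > j`. -/
def symbolHooks {d : ℕ} (S : Fin d → Finset ℕ) : Finset (ℕ × ℕ × Fin d × Fin d) :=
  (Finset.range ((Finset.univ.sup fun i => (S i).sup id) + 1) ×ˢ
      Finset.range ((Finset.univ.sup fun i => (S i).sup id) + 1) ×ˢ
      (Finset.univ : Finset (Fin d)) ×ˢ (Finset.univ : Finset (Fin d))).filter
    fun z => z.1 ∈ S z.2.2.1 ∧ z.2.1 ∉ S z.2.2.2 ∧
      (z.2.1 < z.1 ∨ (z.1 = z.2.1 ∧ z.2.2.2 < z.2.2.1))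

/-- The partition `p(X)` of a β-set `X = {a_1 > … > a_t}`, as the multiset of the
nonzero numbers among `a_i − (t−i)`; the element `a` contributes the part
`a − #{b ∈ X : b < a}`. -/
def partitionOf (X : Finset ℕ) : Multiset ℕ :=
  Multiset.filter (· ≠ 0) (X.val.map fun a => a - (X.filter (· < a)).card)

/-- `r`, the maximal number of parts among the partitions `p(X_i)` of a `d`-symbol. -/
def quotCard {d : ℕ} (S : Fin d → Finset ℕ) : ℕ :=
  Finset.univ.sup fun i => Multiset.card (partitionOf (S i))

/-- `Y` is the balanced quotient `Q(S)` of `S`: each `Y i` is the (unique) β-set of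
cardinality `r` with `p(Y i) = p(S i)`, where `r` is the maximal number of parts
among the `p(S i)`. -/
def IsBalancedQuotient {d : ℕ} (S Y : Fin d → Finset ℕ) : Prop :=
  ∀ i, (Y i).card = quotCard S ∧ partitionOf (Y i) = partitionOf (S i)

/-- The core `C(S) = ([x_0],…,[x_{d−1}])` of a `d`-symbol, `x_i = |X_i|`. -/
def coreSymbol {d : ℕ} (S : Fin d → Finset ℕ) : Fin d → Finset ℕ :=
  fun i => Finset.range (S i).card

/-- The `δ`-length `k(a−b) + c_i − c_j` of a hook `(a,b,i,j)`, for the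
`d`-hook data tuple `δ = (c_0,…,c_{d−1};k)`. -/
noncomputable def hookLen {d : ℕ} (c : Fin d → ℝ) (k : ℝ)
    (z : ℕ × ℕ × Fin d × Fin d) : ℝ :=
  k * ((z.1 - z.2.1 : ℕ) : ℝ) + c z.2.2.1 - c z.2.2.2

/-- The multiset `𝓗^δ(S)` of `δ`-lengths of all hooks of `S`. -/
noncomputable def hookLens {d : ℕ} (c : Fin d → ℝ) (k : ℝ)
    (S : Fin d → Finset ℕ) : Multiset ℝ :=
  (symbolHooks S).val.map (hookLen c k)

/-- `H_{ij}^ℓ(S)`, the set of hooks `(a,b,i,j)` of `S` with `a − b = ℓ`. -/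
def Hij {d : ℕ} (S : Fin d → Finset ℕ) (i j : Fin d) (ℓ : ℕ) :
    Finset (ℕ × ℕ × Fin d × Fin d) :=
  (symbolHooks S).filter fun z => z.2.2.1 = i ∧ z.2.2.2 = j ∧ z.1 - z.2.1 = ℓ

/-- The sign-modified length `h̄^{δ_S}` (on hooks of the balanced quotient), where
`x` records the cardinalities `x_i = |X_i|` of `S`, and `δ_S = (c_i + x_i k; k)`.
For a hook `z = (a,b,u,v)` with `ℓ = a − b`: relabelling so that `Δ = x_i − x_j ≥ 0`,
the sign is `+` if `z` lies in position `(i,j)`, or in position `(j,i)` with `ℓ > Δ`,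
or in position `(j,i)` with `ℓ = Δ` and `i < j`; otherwise the sign is `−`. -/
noncomputable def signedLen {d : ℕ} (x : Fin d → ℕ) (c : Fin d → ℝ) (k : ℝ)
    (z : ℕ × ℕ × Fin d × Fin d) : ℝ :=
  if x z.2.2.2 ≤ x z.2.2.1 then
    k * ((z.1 - z.2.1 : ℕ) : ℝ) + (c z.2.2.1 + (x z.2.2.1 : ℝ) * k)
      - (c z.2.2.2 + (x z.2.2.2 : ℝ) * k)
  else if x z.2.2.2 - x z.2.2.1 < z.1 - z.2.1 ∨
      (z.1 - z.2.1 = x z.2.2.2 - x z.2.2.1 ∧ (z.2.2.2 : ℕ) < (z.2.2.1 : ℕ)) then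
    k * ((z.1 - z.2.1 : ℕ) : ℝ) + (c z.2.2.1 + (x z.2.2.1 : ℝ) * k)
      - (c z.2.2.2 + (x z.2.2.2 : ℝ) * k)
  else
    -(k * ((z.1 - z.2.1 : ℕ) : ℝ) + (c z.2.2.1 + (x z.2.2.1 : ℝ) * k)
      - (c z.2.2.2 + (x z.2.2.2 : ℝ) * k))

/-- The permutation `σ_{d,ℓ,e}` of `ℕ`:
`σ(r(dℓ) + sd + t) = r(dℓ) + sd + ((t + re) mod d)`. -/
def twistFun (d ℓ e : ℕ) (n : ℕ) : ℕ :=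
  d * ℓ * (n / (d * ℓ)) + d * (n % (d * ℓ) / d) + (n % d + n / (d * ℓ) * e) % d

/-- The key of a hook: its arm length `a - b` and its position `(i,j)`. -/
def hookKey {d : ℕ} (z : ℕ × ℕ × Fin d × Fin d) : ℕ × Fin d × Fin d :=
  (z.1 - z.2.1, z.2.2)

lemma mem_symbolHooks {d : ℕ} (S : Fin d → Finset ℕ) (z : ℕ × ℕ × Fin d × Fin d) :
    z ∈ symbolHooks S ↔ z.1 ∈ S z.2.2.1 ∧ z.2.1 ∉ S z.2.2.2 ∧
      (z.2.1 < z.1 ∨ (z.1 = z.2.1 ∧ z.2.2.2 < z.2.2.1)) := by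
  simp only [symbolHooks, Finset.mem_filter, Finset.mem_product, Finset.mem_range,
    Finset.mem_univ, and_true, true_and]
  constructor
  · rintro ⟨_, h⟩; exact h
  · rintro ⟨h1, h2, h3⟩
    have ha : z.1 ≤ (S z.2.2.1).sup id := Finset.le_sup (f := id) h1
    have hb : (S z.2.2.1).sup id ≤ Finset.univ.sup fun i => (S i).sup id :=
      Finset.le_sup (f := fun i => (S i).sup id) (Finset.mem_univ _)
    have hba : z.2.1 ≤ z.1 := by rcases h3 with h | ⟨h, _⟩ <;> omega
    exact ⟨⟨by omega, by omega⟩, h1, h2, h3⟩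

lemma card_hookKey_pos {d : ℕ} (S : Fin d → Finset ℕ) (i j : Fin d) (ℓ : ℕ) (hℓ : ℓ ≠ 0) :
    ((symbolHooks S).filter fun z => hookKey z = (ℓ, i, j)).card
      = ((S i).filter fun a => ℓ ≤ a ∧ a - ℓ ∉ S j).card := by
  refine Finset.card_bij' (fun z _ => z.1) (fun a _ => (a, a - ℓ, i, j)) ?_ ?_ ?_ ?_
  · rintro ⟨a, b, u, v⟩ hz
    rw [Finset.mem_filter, mem_symbolHooks] at hz
    dsimp only at hz ⊢
    obtain ⟨⟨h1, h2, h3⟩, hk⟩ := hz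
    have huv : a - b = ℓ ∧ u = i ∧ v = j := by
      simpa [hookKey, Prod.ext_iff] using hk
    obtain ⟨hab, rfl, rfl⟩ := huv
    have hba : b ≤ a := by rcases h3 with h | ⟨h, _⟩ <;> omega
    have hb : b = a - ℓ := by omega
    rw [Finset.mem_filter]
    exact ⟨h1, by omega, by rw [← hb]; exact h2⟩
  · intro a ha
    rw [Finset.mem_filter] at ha
    obtain ⟨h1, h2, h3⟩ := ha
    rw [Finset.mem_filter, mem_symbolHooks]
    dsimp only
    refine ⟨⟨h1, h3, Or.inl (by omega)⟩, ?_⟩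
    have : a - (a - ℓ) = ℓ := by omega
    simp [hookKey, this]
  · rintro ⟨a, b, u, v⟩ hz
    rw [Finset.mem_filter, mem_symbolHooks] at hz
    dsimp only at hz ⊢
    obtain ⟨⟨h1, h2, h3⟩, hk⟩ := hz
    have huv : a - b = ℓ ∧ u = i ∧ v = j := by
      simpa [hookKey, Prod.ext_iff] using hk
    obtain ⟨hab, rfl, rfl⟩ := huv
    have hba : b ≤ a := by rcases h3 with h | ⟨h, _⟩ <;> omega
    have hb : b = a - ℓ := by omega
    simp [hb]
  · intro a _; rfl

lemma card_hookKey_zero {d : ℕ} (S : Fin d → Finset ℕ) (i j : Fin d) :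
    ((symbolHooks S).filter fun z => hookKey z = (0, i, j)).card
      = if j < i then ((S i).filter (· ∉ S j)).card else 0 := by
  split_ifs with hij
  · refine Finset.card_bij' (fun z _ => z.1) (fun a _ => (a, a, i, j)) ?_ ?_ ?_ ?_
    · rintro ⟨a, b, u, v⟩ hz
      rw [Finset.mem_filter, mem_symbolHooks] at hz
      dsimp only at hz ⊢
      obtain ⟨⟨h1, h2, h3⟩, hk⟩ := hz
      have huv : a - b = 0 ∧ u = i ∧ v = j := by
        simpa [hookKey, Prod.ext_iff] using hk
      obtain ⟨hab, rfl, rfl⟩ := huv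
      have hba : a = b := by rcases h3 with h | ⟨h, _⟩ <;> omega
      rw [Finset.mem_filter]
      exact ⟨h1, by rw [hba]; exact h2⟩
    · intro a ha
      rw [Finset.mem_filter] at ha
      rw [Finset.mem_filter, mem_symbolHooks]
      dsimp only
      refine ⟨⟨ha.1, ha.2, Or.inr ⟨rfl, hij⟩⟩, ?_⟩
      simp [hookKey]
    · rintro ⟨a, b, u, v⟩ hz
      rw [Finset.mem_filter, mem_symbolHooks] at hz
      dsimp only at hz ⊢
      obtain ⟨⟨h1, h2, h3⟩, hk⟩ := hz
      have huv : a - b = 0 ∧ u = i ∧ v = j := by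
        simpa [hookKey, Prod.ext_iff] using hk
      obtain ⟨hab, rfl, rfl⟩ := huv
      have hba : a = b := by rcases h3 with h | ⟨h, _⟩ <;> omega
      simp [hba]
    · intro a _; rfl
  · rw [Finset.card_eq_zero, Finset.filter_eq_empty_iff]
    rintro ⟨a, b, u, v⟩ hz
    rw [mem_symbolHooks] at hz
    dsimp only at hz ⊢
    obtain ⟨h1, h2, h3⟩ := hz
    intro hk
    have huv : a - b = 0 ∧ u = i ∧ v = j := by
      simpa [hookKey, Prod.ext_iff] using hk
    obtain ⟨hab, rfl, rfl⟩ := huv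
    rcases h3 with h | ⟨h, hlt⟩
    · omega
    · exact hij hlt

lemma core_bound_pos {ℓ : ℕ} (hℓ : ℓ ≠ 0) (A B : Finset ℕ) :
    A.card - (B.card + ℓ) ≤ (A.filter fun a => ℓ ≤ a ∧ a - ℓ ∉ B).card := by
  have hsub : A ⊆ (A.filter fun a => ℓ ≤ a ∧ a - ℓ ∉ B) ∪ Finset.range ℓ
      ∪ B.image (· + ℓ) := by
    intro a ha
    simp only [Finset.mem_union, Finset.mem_filter, Finset.mem_range, Finset.mem_image]
    by_cases h1 : ℓ ≤ a
    · by_cases h2 : a - ℓ ∈ B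
      · exact Or.inr ⟨a - ℓ, h2, by omega⟩
      · exact Or.inl (Or.inl ⟨ha, h1, h2⟩)
    · exact Or.inl (Or.inr (by omega))
  have h1 := Finset.card_le_card hsub
  have h2 := Finset.card_union_le
    ((A.filter fun a => ℓ ≤ a ∧ a - ℓ ∉ B) ∪ Finset.range ℓ) (B.image (· + ℓ))
  have h3 := Finset.card_union_le (A.filter fun a => ℓ ≤ a ∧ a - ℓ ∉ B)
    (Finset.range ℓ)
  have h4 := Finset.card_image_le (s := B) (f := (· + ℓ))
  have h5 : (Finset.range ℓ).card = ℓ := Finset.card_range ℓ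
  omega

lemma core_bound_zero (A B : Finset ℕ) :
    A.card - B.card ≤ (A.filter (· ∉ B)).card := by
  have hsub : A ⊆ (A.filter (· ∉ B)) ∪ B := by
    intro a ha
    simp only [Finset.mem_union, Finset.mem_filter]
    by_cases h : a ∈ B
    · exact Or.inr h
    · exact Or.inl ⟨ha, h⟩
  have h1 := Finset.card_le_card hsub
  have h2 := Finset.card_union_le (A.filter (· ∉ B)) B
  omega

lemma core_count_pos (xi xj ℓ : ℕ) :
    ((Finset.range xi).filter fun a => ℓ ≤ a ∧ a - ℓ ∉ Finset.range xj).card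
      = xi - (xj + ℓ) := by
  have h : ((Finset.range xi).filter fun a => ℓ ≤ a ∧ a - ℓ ∉ Finset.range xj)
      = Finset.Ico (xj + ℓ) xi := by
    ext a
    simp only [Finset.mem_filter, Finset.mem_range, Finset.mem_Ico]
    omega
  rw [h, Nat.card_Ico]

lemma core_count_zero (xi xj : ℕ) :
    ((Finset.range xi).filter (· ∉ Finset.range xj)).card = xi - xj := by
  have h : ((Finset.range xi).filter (· ∉ Finset.range xj)) = Finset.Ico xj xi := by
    ext a
    simp only [Finset.mem_filter, Finset.mem_range, Finset.mem_Ico]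
    omega
  rw [h, Nat.card_Ico]

/-- For any `d`-hook data tuple `δ`, the multiset `𝓗^δ(C)` of `δ`-lengths of the
hooks of the core `C = C(S)` is a sub-multiset of `𝓗^δ(S)`. -/
theorem hookLens_core_le (d : ℕ) (hd : 0 < d) (S : Fin d → Finset ℕ)
    (c : Fin d → ℝ) (k : ℝ) (hk : 0 ≤ k) :
    hookLens c k (coreSymbol S) ≤ hookLens c k S := by
  have hkey : ∀ T : Fin d → Finset ℕ, hookLens c k T
      = ((symbolHooks T).val.map hookKey).map
          (fun p => k * (p.1 : ℝ) + c p.2.1 - c p.2.2) := by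
    intro T
    rw [Multiset.map_map]
    rfl
  rw [hkey, hkey]
  apply Multiset.map_le_map
  rw [Multiset.le_iff_count]
  rintro ⟨ℓ, i, j⟩
  rw [Multiset.count_map, Multiset.count_map]
  have hcnt : ∀ T : Fin d → Finset ℕ,
      (Multiset.filter (fun z => (ℓ, i, j) = hookKey z) (symbolHooks T).val).card
        = ((symbolHooks T).filter fun z => hookKey z = (ℓ, i, j)).card := by
    intro T
    rw [Multiset.filter_congr (fun z _ => eq_comm)]
    rfl
  rw [hcnt, hcnt]
  rcases Nat.eq_zero_or_pos ℓ with hℓ | hℓ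
  · subst hℓ
    rw [card_hookKey_zero, card_hookKey_zero]
    split_ifs with hij
    · have h1 : ((coreSymbol S i).filter (· ∉ coreSymbol S j)).card
          = (S i).card - (S j).card := core_count_zero _ _
      rw [h1]
      exact le_trans (by omega) (core_bound_zero (S i) (S j) |>.trans_eq rfl)
    · exact le_refl 0
  · have hℓ' : ℓ ≠ 0 := by omega
    rw [card_hookKey_pos _ _ _ _ hℓ', card_hookKey_pos _ _ _ _ hℓ']
    have h1 : ((coreSymbol S i).filter fun a => ℓ ≤ a ∧ a - ℓ ∉ coreSymbol S j).card
        = (S i).card - ((S j).card + ℓ) := core_count_pos _ _ _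
    rw [h1]
    exact core_bound_pos hℓ' (S i) (S j)
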